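/- For the averaged system of the zero-Hopf bifurcation at p, the determinant of the Jacobian at s₂ and s₃ equals a₁²b₁(c⁴ - 8c²d² + 7d⁴ + 2cd²e)/(3d² - c²)^{7/2}, which is nonzero when a₁ ≠ 0, b₁ ≠ 0, 3d² > c², and c⁴ - 8c²d² + 7d⁴ + 2cd²e ≠ 0. -/

import Mathlib

private lemma deriv_affine (A B K x : ℝ) : deriv (fun t => (A + B * t) / K) x = B / K := by
  have h : HasDerivAt (fun t => (A + B * t) / K) ((0 + B * 1) / K) x :=
    ((hasDerivAt_const x A).add ((hasDerivAt_id x).const_mul B)).div_const K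
  simpa using h.deriv

private lemma deriv_quad (A B K x : ℝ) :
    deriv (fun t => (A + B * t ^ 2) / K) x = B * (2 * x) / K := by
  have h : HasDerivAt (fun t => (A + B * t ^ 2) / K) ((0 + B * ((2:ℕ) * x ^ 1)) / K) x :=
    ((hasDerivAt_const x A).add ((hasDerivAt_pow 2 x).const_mul B)).div_const K
  simpa using h.deriv


/-- At the zeros `s₂,₃` of the averaged system from the zero-Hopf bifurcation at `p`, the
Jacobian determinant equals `a₁²b₁(c⁴ - 8c²d² + 7d⁴ + 2cd²e)/(3d² - c²)^{7/2}`, which is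
nonzero when `a₁ ≠ 0`, `b₁ ≠ 0`, `3d² > c²` and `c⁴ - 8c²d² + 7d⁴ + 2cd²e ≠ 0`. -/
theorem averaged_system_p_jacobian_s23
    (a₁ b₁ c d e : ℝ) (hc : c ≠ 0) (hd : d ≠ 0) (h3d : 3 * d ^ 2 - c ^ 2 > 0)
    (ha₁ : 0 < a₁)
    (hrad : b₁ * (c ^ 4 - 8 * c ^ 2 * d ^ 2 + 7 * d ^ 4 + 2 * c * d ^ 2 * e) ≤ 0) :
    let f₁ : ℝ → ℝ → ℝ → ℝ := fun r z w =>
      r * (a₁ * (c ^ 2 - 3 * d ^ 2) - 2 * c ^ 2 * z)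
        / (2 * Real.sqrt (3 * d ^ 2 - c ^ 2) ^ 3)
    let f₂ : ℝ → ℝ → ℝ → ℝ := fun r z w =>
      2 * c ^ 2 * (3 * a₁ * b₁ * (c ^ 4 - 4 * c ^ 2 * d ^ 2 + 3 * d ^ 4)
            * (c ^ 2 + d ^ 2 - c * e) / (2 * c ^ 2)
          - 2 * d ^ 2 * (c ^ 2 - 3 * d ^ 2) * r ^ 2 + 12 * c ^ 4 * w ^ 2
          - 3 * b₁ * (c ^ 2 - 3 * d ^ 2) * (2 * c ^ 2 - 2 * d ^ 2 - c * e) * z)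
        / (6 * Real.sqrt (3 * d ^ 2 - c ^ 2) * (c ^ 3 - 3 * c * d ^ 2) ^ 2)
    let f₃ : ℝ → ℝ → ℝ → ℝ := fun r z w =>
      2 * c ^ 2 * w * z / Real.sqrt (3 * d ^ 2 - c ^ 2) ^ 3
    let z₀ : ℝ := a₁ * (1 - 3 * d ^ 2 / c ^ 2) / 2
    let w₀ : ℝ := 0
    ∀ r₀ : ℝ,
      (r₀ = Real.sqrt 3 * Real.sqrt a₁
          * Real.sqrt (-(b₁ * (c ^ 4 - 8 * c ^ 2 * d ^ 2 + 7 * d ^ 4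
              + 2 * c * d ^ 2 * e))) / (2 * c * d) ∨
       r₀ = -(Real.sqrt 3 * Real.sqrt a₁
          * Real.sqrt (-(b₁ * (c ^ 4 - 8 * c ^ 2 * d ^ 2 + 7 * d ^ 4
              + 2 * c * d ^ 2 * e))) / (2 * c * d))) →
      (Matrix.det
          !![deriv (fun r => f₁ r z₀ w₀) r₀, deriv (fun z => f₁ r₀ z w₀) z₀,
              deriv (fun w => f₁ r₀ z₀ w) w₀;
             deriv (fun r => f₂ r z₀ w₀) r₀, deriv (fun z => f₂ r₀ z w₀) z₀,
              deriv (fun w => f₂ r₀ z₀ w) w₀;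
             deriv (fun r => f₃ r z₀ w₀) r₀, deriv (fun z => f₃ r₀ z w₀) z₀,
              deriv (fun w => f₃ r₀ z₀ w) w₀] =
        a₁ ^ 2 * b₁ * (c ^ 4 - 8 * c ^ 2 * d ^ 2 + 7 * d ^ 4 + 2 * c * d ^ 2 * e)
          / Real.sqrt (3 * d ^ 2 - c ^ 2) ^ 7) ∧
      (a₁ ≠ 0 → b₁ ≠ 0 →
        c ^ 4 - 8 * c ^ 2 * d ^ 2 + 7 * d ^ 4 + 2 * c * d ^ 2 * e ≠ 0 →
        Matrix.det
          !![deriv (fun r => f₁ r z₀ w₀) r₀, deriv (fun z => f₁ r₀ z w₀) z₀,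
              deriv (fun w => f₁ r₀ z₀ w) w₀;
             deriv (fun r => f₂ r z₀ w₀) r₀, deriv (fun z => f₂ r₀ z w₀) z₀,
              deriv (fun w => f₂ r₀ z₀ w) w₀;
             deriv (fun r => f₃ r z₀ w₀) r₀, deriv (fun z => f₃ r₀ z w₀) z₀,
              deriv (fun w => f₃ r₀ z₀ w) w₀] ≠ 0) := by
  intro f₁ f₂ f₃ z₀ w₀ r₀ hr₀
  set Q : ℝ := c ^ 4 - 8 * c ^ 2 * d ^ 2 + 7 * d ^ 4 + 2 * c * d ^ 2 * e with hQ
  have hsq : Real.sqrt (3 * d ^ 2 - c ^ 2) ^ 2 = 3 * d ^ 2 - c ^ 2 := Real.sq_sqrt h3d.le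
  have hs0 : Real.sqrt (3 * d ^ 2 - c ^ 2) ≠ 0 := by
    positivity

  have hr2 : 4 * c ^ 2 * d ^ 2 * r₀ ^ 2 = 3 * a₁ * (-(b₁ * Q)) := by
    have hX : (0:ℝ) ≤ -(b₁ * Q) := by linarith
    have key : (Real.sqrt 3 * Real.sqrt a₁ * Real.sqrt (-(b₁ * Q)) / (2 * c * d)) ^ 2
        = 3 * a₁ * (-(b₁ * Q)) / (4 * c ^ 2 * d ^ 2) := by
      rw [div_pow, mul_pow, mul_pow, Real.sq_sqrt (by norm_num : (0:ℝ) ≤ 3),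
        Real.sq_sqrt ha₁.le, Real.sq_sqrt hX]
      ring_nf
    have h2 : r₀ ^ 2 = 3 * a₁ * (-(b₁ * Q)) / (4 * c ^ 2 * d ^ 2) := by
      rcases hr₀ with h | h
      · rw [h]; exact key
      · rw [h, neg_sq]; exact key
    rw [h2]; field_simp
  -- entry (1,1)
  have e11 : deriv (fun r => f₁ r z₀ w₀) r₀ = 0 := by
    have h : (fun r => f₁ r z₀ w₀) = fun r =>
        ((0:ℝ) + (a₁ * (c ^ 2 - 3 * d ^ 2) - 2 * c ^ 2 * z₀) * r)
          / (2 * Real.sqrt (3 * d ^ 2 - c ^ 2) ^ 3) := by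
      funext r; show f₁ r z₀ w₀ = _; unfold f₁; ring
    rw [h, deriv_affine]
    have hz : a₁ * (c ^ 2 - 3 * d ^ 2) - 2 * c ^ 2 * z₀ = 0 := by
      unfold z₀; field_simp; ring
    rw [hz, zero_div]
  -- entry (1,2)
  have e12 : deriv (fun z => f₁ r₀ z w₀) z₀ =
      -(2 * c ^ 2) * r₀ / (2 * Real.sqrt (3 * d ^ 2 - c ^ 2) ^ 3) := by
    have h : (fun z => f₁ r₀ z w₀) = fun z =>
        (r₀ * (a₁ * (c ^ 2 - 3 * d ^ 2)) + -(2 * c ^ 2) * r₀ * z)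
          / (2 * Real.sqrt (3 * d ^ 2 - c ^ 2) ^ 3) := by
      funext z; show f₁ r₀ z w₀ = _; unfold f₁; ring
    rw [h, deriv_affine]
  -- entry (1,3)
  have e13 : deriv (fun w => f₁ r₀ z₀ w) w₀ = 0 := by
    have h : (fun w : ℝ => f₁ r₀ z₀ w) = fun _ => f₁ r₀ z₀ 0 := rfl
    rw [h, deriv_const]
  -- entry (2,1)
  have e21 : deriv (fun r => f₂ r z₀ w₀) r₀ =
      -(4 * c ^ 2 * d ^ 2 * (c ^ 2 - 3 * d ^ 2)) * (2 * r₀)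
        / (6 * Real.sqrt (3 * d ^ 2 - c ^ 2) * (c ^ 3 - 3 * c * d ^ 2) ^ 2) := by
    have h : (fun r => f₂ r z₀ w₀) = fun r =>
        ((2 * c ^ 2 * (3 * a₁ * b₁ * (c ^ 4 - 4 * c ^ 2 * d ^ 2 + 3 * d ^ 4)
            * (c ^ 2 + d ^ 2 - c * e) / (2 * c ^ 2) + 12 * c ^ 4 * w₀ ^ 2
          - 3 * b₁ * (c ^ 2 - 3 * d ^ 2) * (2 * c ^ 2 - 2 * d ^ 2 - c * e) * z₀))
          + -(4 * c ^ 2 * d ^ 2 * (c ^ 2 - 3 * d ^ 2)) * r ^ 2)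
          / (6 * Real.sqrt (3 * d ^ 2 - c ^ 2) * (c ^ 3 - 3 * c * d ^ 2) ^ 2) := by
      funext r; show f₂ r z₀ w₀ = _; unfold f₂; ring
    rw [h, deriv_quad]
  -- entry (2,3)
  have e23 : deriv (fun w => f₂ r₀ z₀ w) w₀ = 0 := by
    have h : (fun w => f₂ r₀ z₀ w) = fun w =>
        ((2 * c ^ 2 * (3 * a₁ * b₁ * (c ^ 4 - 4 * c ^ 2 * d ^ 2 + 3 * d ^ 4)
            * (c ^ 2 + d ^ 2 - c * e) / (2 * c ^ 2)
          - 2 * d ^ 2 * (c ^ 2 - 3 * d ^ 2) * r₀ ^ 2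
          - 3 * b₁ * (c ^ 2 - 3 * d ^ 2) * (2 * c ^ 2 - 2 * d ^ 2 - c * e) * z₀))
          + (24 * c ^ 6) * w ^ 2)
          / (6 * Real.sqrt (3 * d ^ 2 - c ^ 2) * (c ^ 3 - 3 * c * d ^ 2) ^ 2) := by
      funext w; show f₂ r₀ z₀ w = _; unfold f₂; ring
    rw [h, deriv_quad]
    show _ * (2 * w₀) / _ = 0
    unfold w₀; simp
  -- entry (3,1)
  have e31 : deriv (fun r => f₃ r z₀ w₀) r₀ = 0 := by
    have h : (fun r : ℝ => f₃ r z₀ w₀) = fun _ => f₃ 0 z₀ w₀ := rfl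
    rw [h, deriv_const]
  -- entry (3,2)
  have e32 : deriv (fun z => f₃ r₀ z w₀) z₀ = 0 := by
    have h : (fun z => f₃ r₀ z w₀) = fun z =>
        ((0:ℝ) + (2 * c ^ 2 * w₀) * z) / Real.sqrt (3 * d ^ 2 - c ^ 2) ^ 3 := by
      funext z; show f₃ r₀ z w₀ = _; unfold f₃; ring
    rw [h, deriv_affine]
    unfold w₀; simp
  -- entry (3,3)
  have e33 : deriv (fun w => f₃ r₀ z₀ w) w₀ =
      (2 * c ^ 2 * z₀) / Real.sqrt (3 * d ^ 2 - c ^ 2) ^ 3 := by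
    have h : (fun w => f₃ r₀ z₀ w) = fun w =>
        ((0:ℝ) + (2 * c ^ 2 * z₀) * w) / Real.sqrt (3 * d ^ 2 - c ^ 2) ^ 3 := by
      funext w; show f₃ r₀ z₀ w = _; unfold f₃; ring
    rw [h, deriv_affine]
  have hc3 : c ^ 3 - 3 * c * d ^ 2 = -(c * Real.sqrt (3 * d ^ 2 - c ^ 2) ^ 2) := by
    rw [hsq]; ring
  have hc2 : c ^ 2 - 3 * d ^ 2 = -(Real.sqrt (3 * d ^ 2 - c ^ 2) ^ 2) := by
    rw [hsq]; ring
  have hdet : Matrix.det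
          !![deriv (fun r => f₁ r z₀ w₀) r₀, deriv (fun z => f₁ r₀ z w₀) z₀,
              deriv (fun w => f₁ r₀ z₀ w) w₀;
             deriv (fun r => f₂ r z₀ w₀) r₀, deriv (fun z => f₂ r₀ z w₀) z₀,
              deriv (fun w => f₂ r₀ z₀ w) w₀;
             deriv (fun r => f₃ r z₀ w₀) r₀, deriv (fun z => f₃ r₀ z w₀) z₀,
              deriv (fun w => f₃ r₀ z₀ w) w₀] =
        a₁ ^ 2 * b₁ * Q / Real.sqrt (3 * d ^ 2 - c ^ 2) ^ 7 := by
    rw [e11, e12, e13, e21, e23, e31, e32, e33]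
    simp only [Matrix.det_fin_three, Matrix.of_apply, Matrix.cons_val', Matrix.cons_val_zero, Matrix.empty_val',
      Matrix.cons_val_fin_one, Matrix.cons_val_one, Matrix.head_cons,
      Matrix.head_fin_const, Matrix.cons_val_two, Matrix.tail_cons]
    unfold z₀
    rw [hc3, hc2]
    simp only [zero_mul, mul_zero, sub_zero, zero_sub, add_zero, zero_add]
    rw [show a₁ ^ 2 * b₁ * Q / Real.sqrt (3 * d ^ 2 - c ^ 2) ^ 7
        = -(4 * c ^ 2 * d ^ 2 * r₀ ^ 2) * a₁ / (3 * Real.sqrt (3 * d ^ 2 - c ^ 2) ^ 7) by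
      rw [hr2]; field_simp]
    field_simp
    linear_combination (6 * r₀ ^ 2) * hsq
  exact ⟨hdet, fun ha hb hq => by
    rw [hdet]
    exact div_ne_zero (mul_ne_zero (mul_ne_zero (pow_ne_zero 2 ha) hb) (hQ ▸ hq))
      (pow_ne_zero 7 hs0)⟩
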